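/- Let A, B, C be locally small categories (hom-sets in Type u), let g : A ⥤ B, h : B ⥤ C, f : A ⥤ C be functors, and let φ : f ⟶ g ⋙ h be a natural transformation. Define B(g,1) : B ⥤ (Aᵒᵖ ⥤ Type u) by b ↦ (a ↦ Hom_B(g.obj a, b)), define C(f,1) : C ⥤ (Aᵒᵖ ⥤ Type u) by c ↦ (a ↦ Hom_C(f.obj a, c)), and define φ' : B(g,1) ⟶ h ⋙ C(f,1) by ((φ'.app b).app a)(β) = φ.app a ≫ h.map β for β : g.obj a ⟶ b. Then φ exhibits g as an absolute left lifting of f along h if and only if φ' is a natural isomorphism (equivalently, the maps Hom_B(g.obj a, b) → Hom_C(f.obj a, h.obj b), β ↦ φ.app a ≫ h.map β, are bijections for all a, b). -/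

import Mathlib

open CategoryTheory Opposite

universe u v₁ v₂ v₃ u₁ u₂ u₃ ux vx

section HomFunctor

variable {A : Type u₁} {B : Type u₂} {C : Type u₃}
variable [Category.{u} A] [Category.{u} B] [Category.{u} C]

/-- The functor `B(g,1) : B ⥤ (Aᵒᵖ ⥤ Type u)`, `b ↦ (a ↦ Hom_B(g.obj a, b))`. -/
def homFunctor (g : A ⥤ B) : B ⥤ (Aᵒᵖ ⥤ Type u) where
  obj b :=
    { obj := fun a => (g.obj a.unop ⟶ b)
      map := fun m => TypeCat.ofHom fun β => g.map m.unop ≫ β }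
  map k := { app := fun a => TypeCat.ofHom fun β => β ≫ k }

/-- The 2-cell `φ' : B(g,1) ⟶ h ⋙ C(f,1)` associated to `φ : f ⟶ g ⋙ h`, with
components `β ↦ φ.app a ≫ h.map β`. -/
def primeTrans (g : A ⥤ B) (h : B ⥤ C) (f : A ⥤ C) (φ : f ⟶ g ⋙ h) :
    homFunctor g ⟶ h ⋙ homFunctor f where
  app b :=
    { app := fun a => TypeCat.ofHom fun β => φ.app a.unop ≫ h.map β
      naturality := by
        intro a a' m
        ext (β : g.obj a.unop ⟶ b)
        have hn := φ.naturality m.unop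
        dsimp [homFunctor] at *
        change φ.app a'.unop ≫ h.map (g.map m.unop ≫ β) = f.map m.unop ≫ φ.app a.unop ≫ h.map β
        rw [Functor.map_comp, ← Category.assoc, ← hn, Category.assoc] }
  naturality := by
    intro b b' k
    ext a (β : g.obj a.unop ⟶ b)
    dsimp [homFunctor]
    change φ.app a.unop ≫ h.map (β ≫ k) = (φ.app a.unop ≫ h.map β) ≫ h.map k
    rw [Functor.map_comp, Category.assoc]

end HomFunctor


/-- `ψ : s ⟶ h ⋙ t` exhibits `h` as an absolute left lifting of `s` along `t` when for
every category `X` and all functors `x : X ⥤ B`, `k : X ⥤ C`, pasting with the whiskering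
of `ψ` by `x` is a bijection from 2-cells `x ⋙ h ⟶ k` to 2-cells `x ⋙ s ⟶ k ⋙ t`. -/
def ExhibitsAbsoluteLeftLifting.{xu, xv, bu, bv, cu, cv, pu, pv}
    {B : Type bu} {C : Type cu} {P : Type pu}
    [Category.{bv} B] [Category.{cv} C] [Category.{pv} P]
    (s : B ⥤ P) (h : B ⥤ C) (t : C ⥤ P) (ψ : s ⟶ h ⋙ t) : Prop :=
  ∀ (X : Type xu) [Category.{xv} X] (x : X ⥤ B) (k : X ⥤ C),
    Function.Bijective fun δ : x ⋙ h ⟶ k => Functor.whiskerLeft x ψ ≫ Functor.whiskerRight δ t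

section AuxProof

variable {A : Type u₁} {B : Type u₂} {C : Type u₃}
variable [Category.{u} A] [Category.{u} B] [Category.{u} C]

private lemma e_gmap (g : A ⥤ B) (h : B ⥤ C) (f : A ⥤ C) (φ : f ⟶ g ⋙ h)
    {a a' : A} (m : a' ⟶ a) {b : B} (β : g.obj a ⟶ b) :
    φ.app a' ≫ h.map (g.map m ≫ β) = f.map m ≫ φ.app a ≫ h.map β := by
  have hn := φ.naturality m
  dsimp at hn
  rw [h.map_comp, ← Category.assoc, ← hn, Category.assoc]

private lemma e_comp (g : A ⥤ B) (h : B ⥤ C) (f : A ⥤ C) (φ : f ⟶ g ⋙ h)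
    {a : A} {b b' : B} (β : g.obj a ⟶ b) (κ : b ⟶ b') :
    φ.app a ≫ h.map (β ≫ κ) = (φ.app a ≫ h.map β) ≫ h.map κ := by
  rw [h.map_comp, Category.assoc]

/-- From the absolute lifting property, extract componentwise bijectivity using the
one-object category. -/
private lemma componentwise_of_lifting (g : A ⥤ B) (h : B ⥤ C) (f : A ⥤ C)
    (φ : f ⟶ g ⋙ h) (hl : ExhibitsAbsoluteLeftLifting.{ux, vx} f g h φ) (a : A) (b : B) :
    Function.Bijective (fun β : g.obj a ⟶ b => φ.app a ≫ h.map β) := by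
  let X := ULiftHom.{vx} (ULift.{ux} (Discrete PUnit.{1}))
  let pt : X := ⟨⟨⟨⟩⟩⟩
  let x : X ⥤ A := (Functor.const X).obj a
  let k : X ⥤ B := (Functor.const X).obj b
  have hb := hl X x k
  -- package a morphism as a (constant) natural transformation
  let mk : (g.obj a ⟶ b) → (x ⋙ g ⟶ k) := fun β =>
    { app := fun _ => β
      naturality := by intro p q m; dsimp [x, k]; simp }
  have himg : ∀ β : g.obj a ⟶ b,
      (Functor.whiskerLeft x φ ≫ Functor.whiskerRight (mk β) h).app pt = φ.app a ≫ h.map β := by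
    intro β; rfl
  constructor
  · intro β₁ β₂ hβ
    have h1 : Functor.whiskerLeft x φ ≫ Functor.whiskerRight (mk β₁) h
        = Functor.whiskerLeft x φ ≫ Functor.whiskerRight (mk β₂) h := by
      ext p
      simpa [mk, x, k] using hβ
    have := hb.injective h1
    have := congrArg (fun σ => σ.app pt) this
    simpa [mk] using this
  · intro γ
    let α : x ⋙ f ⟶ k ⋙ h :=
      { app := fun _ => γ
        naturality := by intro p q m; dsimp [x, k]; simp }
    obtain ⟨δ, hδ⟩ := hb.surjective α
    refine ⟨δ.app pt, ?_⟩
    have := congrArg (fun σ => σ.app pt) hδ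
    simpa [α, x, k] using this

/-- From the natural isomorphism, extract componentwise bijectivity. -/
private lemma componentwise_of_iso (g : A ⥤ B) (h : B ⥤ C) (f : A ⥤ C)
    (φ : f ⟶ g ⋙ h) (hiso : IsIso (primeTrans g h f φ)) (a : A) (b : B) :
    Function.Bijective (fun β : g.obj a ⟶ b => φ.app a ≫ h.map β) := by
  have h1 : IsIso ((primeTrans g h f φ).app b) := inferInstance
  have h2 : IsIso (((primeTrans g h f φ).app b).app (op a)) := inferInstance
  exact (isIso_iff_bijective _).mp h2

end AuxProof

/-- `φ : f ⟶ g ⋙ h` exhibits `g` as an absolute left lifting of `f`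
along `h` if and only if `φ' : B(g,1) ⟶ h ⋙ C(f,1)` is a natural isomorphism. -/
theorem stmt17 {A : Type u₁} {B : Type u₂} {C : Type u₃}
    [Category.{u} A] [Category.{u} B] [Category.{u} C]
    (g : A ⥤ B) (h : B ⥤ C) (f : A ⥤ C) (φ : f ⟶ g ⋙ h) :
    ExhibitsAbsoluteLeftLifting.{ux, vx} f g h φ ↔ IsIso (primeTrans g h f φ) := by
  constructor
  · intro hl
    have key := componentwise_of_lifting.{u, u₁, u₂, u₃, ux, vx} g h f φ hl
    have : ∀ b : B, IsIso ((primeTrans g h f φ).app b) := by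
      intro b
      have : ∀ a : Aᵒᵖ, IsIso (((primeTrans g h f φ).app b).app a) := by
        intro a
        rw [isIso_iff_bijective]
        exact key a.unop b
      exact NatIso.isIso_of_isIso_app _
    exact NatIso.isIso_of_isIso_app _
  · intro hiso
    intro X _ x k
    have bij := componentwise_of_iso g h f φ hiso
    let E : ∀ (a : A) (b : B), (g.obj a ⟶ b) ≃ (f.obj a ⟶ h.obj b) := fun a b =>
      Equiv.ofBijective _ (bij a b)
    have hE : ∀ {a : A} {b : B} (β : g.obj a ⟶ b), E a b β = φ.app a ≫ h.map β :=
      fun _ => rfl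
    constructor
    · intro δ₁ δ₂ hδ
      ext p
      apply (bij (x.obj p) (k.obj p)).injective
      exact congrArg (fun σ => σ.app p) hδ
    · intro α
      refine ⟨{ app := fun p => (E (x.obj p) (k.obj p)).symm (α.app p)
                naturality := ?_ }, ?_⟩
      · intro p q m
        apply (bij (x.obj p) (k.obj q)).injective
        show E _ _ ((x ⋙ g).map m ≫ (E _ _).symm (α.app q))
            = E _ _ ((E _ _).symm (α.app p) ≫ k.map m)
        rw [hE, hE]
        have hL : φ.app (x.obj p) ≫ h.map (g.map (x.map m) ≫ (E _ _).symm (α.app q))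
            = f.map (x.map m) ≫ α.app q := by
          rw [e_gmap g h f φ, ← hE, Equiv.apply_symm_apply]
        have hR : φ.app (x.obj p) ≫ h.map ((E _ _).symm (α.app p) ≫ k.map m)
            = α.app p ≫ h.map (k.map m) := by
          rw [e_comp g h f φ, ← hE, Equiv.apply_symm_apply]
        have hn := α.naturality m
        dsimp at hn ⊢
        rw [hL, hR, hn]
      · ext p
        show E _ _ ((E _ _).symm (α.app p)) = α.app p
        exact (E _ _).apply_symm_apply (α.app p)
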